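/- Let A be a symmetric positive definite d×d matrix and M a skew-symmetric d×d matrix. Define F(p,q) := (1/2) p·Ap + (1/2)(q - Mp)·A⁻¹(q - Mp). Then F is convex on ℝ^d × ℝ^d, F(p,q) ≥ p·q for all p, q, and F(p,q) = p·q if and only if q = (A + M)p. -/

import Mathlib

open Matrix

lemma dot_symm {d : ℕ} {B : Matrix (Fin d) (Fin d) ℝ} (hs : Bᵀ = B) (x y : Fin d → ℝ) :
    x ⬝ᵥ B.mulVec y = y ⬝ᵥ B.mulVec x := by
  rw [Matrix.dotProduct_mulVec, ← Matrix.mulVec_transpose, hs, dotProduct_comm]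

lemma quad_convexOn {d : ℕ} {B : Matrix (Fin d) (Fin d) ℝ} (hB : B.PosSemidef) :
    ConvexOn ℝ Set.univ (fun x : Fin d → ℝ => x ⬝ᵥ B.mulVec x) := by
  refine ⟨convex_univ, fun x _ y _ a b ha hb hab => ?_⟩
  have hsym : Bᵀ = B := by have h := hB.1; simp at h; exact h
  have hxy : x ⬝ᵥ B.mulVec y = y ⬝ᵥ B.mulVec x := dot_symm hsym x y
  have key : 0 ≤ (x - y) ⬝ᵥ B.mulVec (x - y) := by simpa only [star_trivial] using hB.dotProduct_mulVec_nonneg (x - y)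
  have expand : (a • x + b • y) ⬝ᵥ B.mulVec (a • x + b • y)
      = a^2 * (x ⬝ᵥ B.mulVec x) + 2*a*b*(x ⬝ᵥ B.mulVec y) + b^2 * (y ⬝ᵥ B.mulVec y) := by
    simp [Matrix.mulVec_add, Matrix.mulVec_smul, dotProduct_add,
      add_dotProduct, smul_dotProduct, dotProduct_smul,
      smul_eq_mul, hxy]
    ring
  have expand2 : 0 ≤ a * b * ((x ⬝ᵥ B.mulVec x) - 2*(x ⬝ᵥ B.mulVec y) + (y ⬝ᵥ B.mulVec y)) := by
    have e : (x - y) ⬝ᵥ B.mulVec (x - y)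
        = (x ⬝ᵥ B.mulVec x) - 2*(x ⬝ᵥ B.mulVec y) + (y ⬝ᵥ B.mulVec y) := by
      simp [Matrix.mulVec_sub, dotProduct_sub, sub_dotProduct, hxy]
      ring
    rw [← e]
    exact mul_nonneg (mul_nonneg ha hb) key
  have hb1 : b = 1 - a := by linarith
  subst hb1
  simp only [smul_eq_mul, expand]
  nlinarith [expand2]

theorem stmt5 (d : ℕ) (A M : Matrix (Fin d) (Fin d) ℝ)
    (hA : A.PosDef) (hM : Mᵀ = -M) :
    ConvexOn ℝ Set.univ
      (fun pq : (Fin d → ℝ) × (Fin d → ℝ) =>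
        (1 / 2) * (pq.1 ⬝ᵥ A.mulVec pq.1) +
          (1 / 2) * ((pq.2 - M.mulVec pq.1) ⬝ᵥ A⁻¹.mulVec (pq.2 - M.mulVec pq.1))) ∧
    (∀ p q : Fin d → ℝ, p ⬝ᵥ q ≤
      (1 / 2) * (p ⬝ᵥ A.mulVec p) +
        (1 / 2) * ((q - M.mulVec p) ⬝ᵥ A⁻¹.mulVec (q - M.mulVec p))) ∧
    (∀ p q : Fin d → ℝ,
      (1 / 2) * (p ⬝ᵥ A.mulVec p) +
          (1 / 2) * ((q - M.mulVec p) ⬝ᵥ A⁻¹.mulVec (q - M.mulVec p)) = p ⬝ᵥ q ↔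
        q = (A + M).mulVec p) := by
  have hAinv : A⁻¹.PosDef := hA.inv
  have hAu : IsUnit A.det := isUnit_iff_ne_zero.2 (ne_of_gt hA.det_pos)
  have hAT : Aᵀ = A := by have h := hA.1; simp at h; exact h
  have hAinvT : A⁻¹ᵀ = A⁻¹ := by rw [Matrix.transpose_nonsing_inv, hAT]
  have hAinvA : ∀ v : Fin d → ℝ, A⁻¹.mulVec (A.mulVec v) = v := fun v => by
    rw [Matrix.mulVec_mulVec, Matrix.nonsing_inv_mul _ hAu, Matrix.one_mulVec]
  have key : ∀ p q : Fin d → ℝ,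
      (1 / 2) * (p ⬝ᵥ A.mulVec p) +
        (1 / 2) * ((q - M.mulVec p) ⬝ᵥ A⁻¹.mulVec (q - M.mulVec p)) - p ⬝ᵥ q
      = (1/2) * ((q - M.mulVec p - A.mulVec p) ⬝ᵥ
          A⁻¹.mulVec (q - M.mulVec p - A.mulVec p)) := by
    intro p q
    set u := q - M.mulVec p with hu
    have hpu : p ⬝ᵥ q = p ⬝ᵥ u := by
      have hpMp : p ⬝ᵥ M.mulVec p = 0 := by
        have h1 : p ⬝ᵥ M.mulVec p = p ⬝ᵥ Mᵀ.mulVec p := by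
          rw [Matrix.dotProduct_mulVec p Mᵀ, ← Matrix.mulVec_transpose,
            Matrix.transpose_transpose, dotProduct_comm]
        rw [hM, Matrix.neg_mulVec, dotProduct_neg] at h1
        linarith
      rw [hu, dotProduct_sub, hpMp, sub_zero]
    have hAiu : A.mulVec p ⬝ᵥ A⁻¹.mulVec u = p ⬝ᵥ u := by
      rw [dot_symm hAinvT, hAinvA, dotProduct_comm]
    have huAi : u ⬝ᵥ A⁻¹.mulVec (A.mulVec p) = p ⬝ᵥ u := by
      rw [hAinvA, dotProduct_comm]
    have hpAp : A.mulVec p ⬝ᵥ A⁻¹.mulVec (A.mulVec p) = p ⬝ᵥ A.mulVec p := by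
      rw [hAinvA, dotProduct_comm]
    rw [hpu]
    simp only [Matrix.mulVec_sub, dotProduct_sub, sub_dotProduct,
      hAiu, huAi, hpAp]
    ring
  refine ⟨?_, fun p q => ?_, fun p q => ?_⟩
  · have h1 : ConvexOn ℝ Set.univ
        (fun pq : (Fin d → ℝ) × (Fin d → ℝ) => pq.1 ⬝ᵥ A.mulVec pq.1) := by
      have h := (quad_convexOn hA.posSemidef).comp_linearMap
        (LinearMap.fst ℝ (Fin d → ℝ) (Fin d → ℝ))
      rw [Set.preimage_univ] at h
      exact h
    have h2 : ConvexOn ℝ Set.univ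
        (fun pq : (Fin d → ℝ) × (Fin d → ℝ) =>
          (pq.2 - M.mulVec pq.1) ⬝ᵥ A⁻¹.mulVec (pq.2 - M.mulVec pq.1)) := by
      have h := (quad_convexOn hAinv.posSemidef).comp_linearMap
        (LinearMap.snd ℝ (Fin d → ℝ) (Fin d → ℝ) - (Matrix.mulVecLin M).comp
          (LinearMap.fst ℝ (Fin d → ℝ) (Fin d → ℝ)))
      rw [Set.preimage_univ] at h
      exact h
    exact (h1.smul (by norm_num : (0:ℝ) ≤ 1/2)).add (h2.smul (by norm_num : (0:ℝ) ≤ 1/2))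
  · have h := key p q
    have h0 : 0 ≤ (q - M.mulVec p - A.mulVec p) ⬝ᵥ
        A⁻¹.mulVec (q - M.mulVec p - A.mulVec p) := by
          simpa only [star_trivial] using hAinv.posSemidef.dotProduct_mulVec_nonneg _
    linarith
  · constructor
    · intro h
      have h0 : (q - M.mulVec p - A.mulVec p) ⬝ᵥ
          A⁻¹.mulVec (q - M.mulVec p - A.mulVec p) = 0 := by
        have hk := key p q
        rw [h] at hk
        linarith
      have hr : q - M.mulVec p - A.mulVec p = 0 := by
        by_contra hne
        exact absurd h0 (ne_of_gt (by simpa only [star_trivial] using hAinv.dotProduct_mulVec_pos hne))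
      have hq : q - (A.mulVec p + M.mulVec p) = 0 := by rw [← hr]; abel
      rw [Matrix.add_mulVec]
      exact sub_eq_zero.mp hq
    · intro h
      have hr : q - M.mulVec p - A.mulVec p = 0 := by
        rw [h, Matrix.add_mulVec]; abel
      have hk := key p q
      rw [hr, zero_dotProduct] at hk
      linarith
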